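/- For every t ∈ ℂ with t ≠ 0, t ≠ 1, t^m ≠ 1 and t^n ≠ 1, the matrices ∂₁ := (1 - t^{-n}, 1 - t^{-m}) (a 1×2 row), ∂₂ (the 2×2 matrix with entries ∂₂_{11} = t^{n-mn}(1 - t^{mn})/(1 - t^n), ∂₂_{12} = -t^{mr+n} ((1 - t^{mn})/(1 - t^n)) ((1 - t^{ns})/(1 - t)), ∂₂_{21} = -t^{m-mn}(1 - t^{mn})/(1 - t^m), ∂₂_{22} = t^{mr+m} ((1 - t^{mn})/(1 - t^m)) ((1 - t^{ns})/(1 - t))), and ∂₃ := (1 - t^{-ns}, t^{-mn} - t^{-mn-1})^⊤ (a 2×1 column) satisfy ∂₁ · ∂₂ = 0 and ∂₂ · ∂₃ = 0. -/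

import Mathlib

set_option maxHeartbeats 2000000


open Matrix

/-- The boundary maps `∂₁`, `∂₂`, `∂₃` of the chain complex of the universal cover of
`X_{T(m,n)}` (specialized along the abelianization) satisfy `∂₁ ∂₂ = 0` and `∂₂ ∂₃ = 0`. -/
theorem stmt_19 (m n r s : ℤ) (hm : 1 < m) (hn : 1 < n) (hmn : IsCoprime m n)
    (hbezout : m * r + n * s = 1) (hr₁ : -n < r) (hr₂ : r < 0) (hs₁ : 0 < s) (hs₂ : s < m)
    (t : ℂ) (ht0 : t ≠ 0) (ht1 : t ≠ 1) (htm : t ^ m ≠ 1) (htn : t ^ n ≠ 1)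
    (D1 : Matrix (Fin 1) (Fin 2) ℂ) (D2 : Matrix (Fin 2) (Fin 2) ℂ)
    (D3 : Matrix (Fin 2) (Fin 1) ℂ)
    (hD1 : D1 = !![1 - t ^ (-n), 1 - t ^ (-m)])
    (hD2 : D2 = !![t ^ (n - m * n) * (1 - t ^ (m * n)) / (1 - t ^ n),
                   -t ^ (m * r + n) * ((1 - t ^ (m * n)) / (1 - t ^ n)) *
                     ((1 - t ^ (n * s)) / (1 - t));
                   -t ^ (m - m * n) * (1 - t ^ (m * n)) / (1 - t ^ m),
                   t ^ (m * r + m) * ((1 - t ^ (m * n)) / (1 - t ^ m)) *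
                     ((1 - t ^ (n * s)) / (1 - t))])
    (hD3 : D3 = !![1 - t ^ (-(n * s)); t ^ (-(m * n)) - t ^ (-(m * n) - 1)]) :
    D1 * D2 = 0 ∧ D2 * D3 = 0 := by
  have hmr : m * r = 1 - n * s := by omega
  have htn0 : (1 : ℂ) - t ^ n ≠ 0 := sub_ne_zero.2 (Ne.symm htn)
  have htm0 : (1 : ℂ) - t ^ m ≠ 0 := sub_ne_zero.2 (Ne.symm htm)
  have ht10 : (1 : ℂ) - t ≠ 0 := sub_ne_zero.2 (Ne.symm ht1)
  have hzn : t ^ n ≠ 0 := zpow_ne_zero _ ht0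
  have hzm : t ^ m ≠ 0 := zpow_ne_zero _ ht0
  have hzmn : t ^ (m * n) ≠ 0 := zpow_ne_zero _ ht0
  have hzns : t ^ (n * s) ≠ 0 := zpow_ne_zero _ ht0
  subst hD1 hD2 hD3
  constructor <;> ext i j <;> fin_cases i <;> fin_cases j <;>
    simp only [Matrix.mul_apply, Fin.sum_univ_two, Matrix.cons_val', Matrix.cons_val_zero,
      Matrix.cons_val_one, Matrix.head_cons, Matrix.head_fin_const, Matrix.empty_val',
      Matrix.cons_val_fin_one, Matrix.zero_apply, hmr, Matrix.of_apply, Fin.zero_eta, Fin.mk_one,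
      Fin.isValue] <;>
    simp only [zpow_sub₀ ht0, zpow_add₀ ht0, _root_.zpow_neg, zpow_one] <;>
    field_simp <;> ring
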